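/- Privacy of output-perturbed gradient descent (Theorem 1, (ε,δ)-DP, convex case): Let ε ∈ (0,1], δ ∈ (0,1). Let f_1,...,f_n and f_1',...,f_n' be two collections of differentiable functions from ℝ^d to ℝ with f_i = f_i' for all i ≠ n, where every function in both collections is convex, β-smooth, and L-Lipschitz. Let F, F' be the respective averages, and run gradient descent with step size 0 < η ≤ 1/β for T steps from a common w_0, producing outputs w_T and w'_T. Let Δ = 3LTη/n and let ν be the spherical Gaussian measure on ℝ^d with coordinate variance 2 log(2/δ)Δ²/ε². Then for every measurable set A ⊆ ℝ^d, ν({z : w_T + z ∈ A}) ≤ e^ε · ν({z : w'_T + z ∈ A}) + δ. -/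

import Mathlib

open Real MeasureTheory RealInnerProductSpace
open scoped ENNReal

section Aux
variable {E : Type*} [NormedAddCommGroup E] [InnerProductSpace ℝ E] [CompleteSpace E]

lemma aux_gradient_eq {f : E → ℝ} {g : E → E} {β : ℝ} (hβ : 0 ≤ β)
    (hs : ∀ u v, |f u - f v - ⟪g v, u - v⟫| ≤ β / 2 * ‖u - v‖ ^ 2) (v : E) :
    gradient f v = g v := by
  have h : HasGradientAt f (g v) v := by
    rw [hasGradientAt_iff_isLittleO, Asymptotics.isLittleO_iff]
    intro c hc
    filter_upwards [Metric.ball_mem_nhds v (show (0:ℝ) < 2*c/(β+1) by positivity)] with u hu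
    have h2 : ‖u - v‖ < 2*c/(β+1) := by rwa [Metric.mem_ball, dist_eq_norm] at hu
    have h3 : (0:ℝ) ≤ ‖u - v‖ := norm_nonneg _
    have h4 : ‖u - v‖ * (β+1) < 2*c := by
      rw [← lt_div_iff₀ (by positivity)]; exact h2
    calc ‖f u - f v - ⟪g v, u - v⟫‖ = |f u - f v - ⟪g v, u - v⟫| := by rw [Real.norm_eq_abs]
    _ ≤ β / 2 * ‖u - v‖ ^ 2 := hs u v
    _ ≤ c * ‖u - v‖ := by nlinarith
  exact h.gradient

lemma aux_grad_norm_le {f : E → ℝ} {β L : ℝ} (hβ : 0 ≤ β) (hL : 0 ≤ L)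
    (hs : ∀ u v, |f u - f v - ⟪gradient f v, u - v⟫| ≤ β / 2 * ‖u - v‖ ^ 2)
    (hl : ∀ u v, |f u - f v| ≤ L * ‖u - v‖) (v : E) : ‖gradient f v‖ ≤ L := by
  set g := gradient f v with hg
  set m := ‖g‖ with hm
  have hm0 : 0 ≤ m := norm_nonneg _
  have key : ∀ t : ℝ, 0 < t → m^2 ≤ L*m + β/2*t*m^2 := by
    intro t ht
    have h1 := hs (v + t • g) v
    have h2 := hl (v + t • g) v
    have e1 : v + t • g - v = t • g := by abel
    rw [e1] at h1 h2
    have e2 : ⟪g, t • g⟫ = t * m^2 := by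
      rw [real_inner_smul_right, real_inner_self_eq_norm_sq]
    have e3 : ‖t • g‖ = t * m := by
      rw [norm_smul, Real.norm_eq_abs, abs_of_pos ht]
    rw [e2, e3] at h1; rw [e3] at h2
    have h5 : t * m^2 ≤ L * (t*m) + β/2 * (t*m)^2 := by
      have ha := le_abs_self (f (v + t • g) - f v)
      have hb := neg_le_abs (f (v + t • g) - f v - t * m ^ 2)
      linarith
    nlinarith
  have key2 : m^2 ≤ L*m := by
    refine le_of_forall_pos_le_add fun ε hε => ?_
    rcases le_or_gt (β/2*m^2) 0 with h | h
    · have := key 1 one_pos; nlinarith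
    · have hβ' : β ≠ 0 := by intro h0; rw [h0] at h; simp at h
      have hm' : m ≠ 0 := by intro h0; rw [h0] at h; simp at h
      have heq : β/2*(ε/(β/2*m^2))*m^2 = ε := by field_simp
      nlinarith [key (ε/(β/2*m^2)) (by positivity)]
  nlinarith [sq_nonneg (m - L)]


lemma aux_tangent {f : E → ℝ} {g : E → E} {β : ℝ} (hβ : 0 ≤ β)
    (hc : ConvexOn ℝ Set.univ f)
    (hs : ∀ u v, |f u - f v - ⟪g v, u - v⟫| ≤ β / 2 * ‖u - v‖ ^ 2)
    (u w : E) : ⟪g u, w - u⟫ ≤ f w - f u := by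
  set c := β / 2 * ‖w - u‖ ^ 2 with hcdef
  have hc0 : 0 ≤ c := by positivity
  have key : ∀ t : ℝ, 0 < t → t ≤ 1 → ⟪g u, w - u⟫ ≤ (f w - f u) + c * t := by
    intro t ht0 ht1
    have hcv := hc.2 (Set.mem_univ u) (Set.mem_univ w)
      (show (0:ℝ) ≤ 1 - t by linarith) (le_of_lt ht0) (by ring)
    have hp : (1 - t) • u + t • w = u + t • (w - u) := by
      rw [sub_smul, one_smul, smul_sub]; abel
    rw [hp] at hcv
    have h1 := hs (u + t • (w - u)) u
    have e1 : u + t • (w - u) - u = t • (w - u) := by abel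
    rw [e1, real_inner_smul_right] at h1
    have e3 : ‖t • (w - u)‖ = t * ‖w - u‖ := by
      rw [norm_smul, Real.norm_eq_abs, abs_of_pos ht0]
    rw [e3] at h1
    have hb := neg_le_abs (f (u + t • (w - u)) - f u - t * ⟪g u, w - u⟫)
    rw [smul_eq_mul, smul_eq_mul] at hcv
    have hmul : t * ⟪g u, w - u⟫ ≤ t * (f w - f u) + c * t^2 := by
      rw [hcdef]; nlinarith [h1, hb, hcv]
    have h6 : t * ⟪g u, w - u⟫ ≤ t * ((f w - f u) + c * t) := by nlinarith [hmul]
    exact le_of_mul_le_mul_left h6 ht0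
  refine le_of_forall_pos_le_add fun ε hε => ?_
  have ht : 0 < min 1 (ε/(c+1)) := lt_min one_pos (by positivity)
  have h := key _ ht (min_le_left _ _)
  have : c * min 1 (ε/(c+1)) ≤ ε := by
    calc c * min 1 (ε/(c+1)) ≤ c * (ε/(c+1)) :=
          mul_le_mul_of_nonneg_left (min_le_right _ _) hc0
    _ ≤ 1 * ε := by
        rw [mul_div_assoc']
        refine div_le_of_le_mul₀ (by positivity) (by positivity) ?_
        nlinarith
    _ = ε := one_mul ε
  linarith

lemma aux_keyineq {f : E → ℝ} {g : E → E} {β : ℝ} (hβ : 0 < β)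
    (hs : ∀ u v, |f u - f v - ⟪g v, u - v⟫| ≤ β / 2 * ‖u - v‖ ^ 2)
    (ht : ∀ u w, ⟪g u, w - u⟫ ≤ f w - f u)
    (u v : E) : f u + ⟪g u, v - u⟫ + 1/(2*β) * ‖g v - g u‖^2 ≤ f v := by
  set D := g v - g u with hD
  set u' := v - (1/β) • D with hu'
  have e1 : u' - v = -((1/β) • D) := by rw [hu']; abel
  have h1 := hs u' v
  rw [e1] at h1
  have e2 : ⟪g v, -((1/β) • D)⟫ = -(1/β) * ⟪g v, D⟫ := by
    rw [inner_neg_right, real_inner_smul_right]; ring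
  have e3 : ‖-((1/β) • D)‖^2 = (1/β)^2 * ‖D‖^2 := by
    rw [norm_neg, norm_smul, Real.norm_eq_abs, abs_of_pos (by positivity), mul_pow]
  rw [e2, e3] at h1
  have h2 := ht u u'
  have e4 : u' - u = (v - u) - (1/β) • D := by rw [hu']; abel
  rw [e4] at h2
  have e5 : ⟪g u, (v - u) - (1/β) • D⟫ = ⟪g u, v - u⟫ - (1/β) * ⟪g u, D⟫ := by
    rw [inner_sub_right, real_inner_smul_right]
  rw [e5] at h2
  have e6 : ⟪g v, D⟫ - ⟪g u, D⟫ = ‖D‖^2 := by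
    rw [← inner_sub_left, ← hD, real_inner_self_eq_norm_sq]
  have h1' : f u' - f v - -(1/β) * ⟪g v, D⟫ ≤ β / 2 * ((1/β)^2 * ‖D‖^2) :=
    le_trans (le_abs_self _) h1
  have hβ2 : β / 2 * ((1/β)^2 * ‖D‖^2) = 1/(2*β) * ‖D‖^2 := by field_simp
  have e7 : (1/β) * ⟪g v, D⟫ - (1/β) * ⟪g u, D⟫ = (1/β) * ‖D‖^2 := by
    rw [← mul_sub, e6]
  have e8 : (1/β) * ‖D‖^2 = 1/(2*β) * ‖D‖^2 + 1/(2*β) * ‖D‖^2 := by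
    rw [← add_mul]; congr 1; field_simp; ring
  linarith

lemma aux_coco {f : E → ℝ} {g : E → E} {β : ℝ} (hβ : 0 < β)
    (hs : ∀ u v, |f u - f v - ⟪g v, u - v⟫| ≤ β / 2 * ‖u - v‖ ^ 2)
    (ht : ∀ u w, ⟪g u, w - u⟫ ≤ f w - f u)
    (u v : E) : (1/β) * ‖g u - g v‖^2 ≤ ⟪g u - g v, u - v⟫ := by
  have h1 := aux_keyineq hβ hs ht u v
  have h2 := aux_keyineq hβ hs ht v u
  have e1 : ‖g u - g v‖ = ‖g v - g u‖ := norm_sub_rev _ _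
  have e2 : ⟪g u - g v, u - v⟫ = ⟪g u, u - v⟫ - ⟪g v, u - v⟫ := inner_sub_left _ _ _
  have e3 : ⟪g u, v - u⟫ = -⟪g u, u - v⟫ := by
    rw [show v - u = -(u - v) by abel, inner_neg_right]
  rw [e1, e2]
  rw [e3] at h1
  rw [show ‖g u - g v‖ = ‖g v - g u‖ from norm_sub_rev _ _] at h2
  have e8 : (1/β) * ‖g v - g u‖^2 = 1/(2*β) * ‖g v - g u‖^2 + 1/(2*β) * ‖g v - g u‖^2 := by
    rw [← add_mul]; congr 1; field_simp; ring
  linarith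

lemma aux_nonexp {g : E → E} {β η : ℝ} (hβ : 0 < β) (hη : 0 < η) (hηβ : η ≤ 1/β)
    (hco : ∀ u v, (1/β) * ‖g u - g v‖^2 ≤ ⟪g u - g v, u - v⟫)
    (u v : E) : ‖(u - η • g u) - (v - η • g v)‖ ≤ ‖u - v‖ := by
  have hrw : (u - η • g u) - (v - η • g v) = (u - v) - η • (g u - g v) := by
    rw [smul_sub]; abel
  rw [hrw]
  have hsq : ‖(u - v) - η • (g u - g v)‖^2 ≤ ‖u - v‖^2 := by
    rw [norm_sub_sq_real, real_inner_smul_right, norm_smul, Real.norm_eq_abs,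
      abs_of_pos hη, mul_pow]
    have h1 := hco u v
    have h2 : ⟪u - v, g u - g v⟫ = ⟪g u - g v, u - v⟫ := real_inner_comm _ _
    have h3 : η * η ≤ η * (1/β) := by nlinarith
    nlinarith [sq_nonneg ‖g u - g v‖, mul_le_mul_of_nonneg_left h1 (le_of_lt hη)]
  nlinarith [norm_nonneg ((u - v) - η • (g u - g v)), norm_nonneg (u - v)]

lemma aux_sensitivity {E : Type*} [NormedAddCommGroup E] [InnerProductSpace ℝ E]
    [CompleteSpace E]
    (n T : ℕ) (hn : 0 < n) (β L η : ℝ) (hβ : 0 < β) (hL : 0 ≤ L)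
    (f f' : Fin n → E → ℝ)
    (hneigh : ∀ i : Fin n, (i : ℕ) ≠ n - 1 → f i = f' i)
    (hconv : ∀ i, ConvexOn ℝ Set.univ (f i)) (hconv' : ∀ i, ConvexOn ℝ Set.univ (f' i))
    (hsmooth : ∀ i u v, |f i u - f i v - ⟪gradient (f i) v, u - v⟫| ≤ β / 2 * ‖u - v‖ ^ 2)
    (hsmooth' : ∀ i u v, |f' i u - f' i v - ⟪gradient (f' i) v, u - v⟫| ≤ β / 2 * ‖u - v‖ ^ 2)
    (hlip : ∀ i u v, |f i u - f i v| ≤ L * ‖u - v‖)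
    (hlip' : ∀ i u v, |f' i u - f' i v| ≤ L * ‖u - v‖)
    (hη : 0 < η) (hηβ : η ≤ 1 / β)
    (F F' : E → ℝ)
    (hF : F = fun w => (1 / (n : ℝ)) * ∑ i, f i w)
    (hF' : F' = fun w => (1 / (n : ℝ)) * ∑ i, f' i w)
    (w w' : ℕ → E)
    (hw0 : w' 0 = w 0)
    (hw : ∀ t, w (t + 1) = w t - η • gradient F (w t))
    (hw' : ∀ t, w' (t + 1) = w' t - η • gradient F' (w' t)) :
    ‖w T - w' T‖ ≤ T * (2 * L * η / n) := by
  subst hF hF'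
  have hn0 : (0:ℝ) < (n:ℝ) := by exact_mod_cast hn
  have hninv : (0:ℝ) ≤ 1 / (n:ℝ) := by positivity
  set G : E → E := fun x => (1/(n:ℝ)) • ∑ i, gradient (f i) x with hG
  set G' : E → E := fun x => (1/(n:ℝ)) • ∑ i, gradient (f' i) x with hG'
  -- generic smoothness of averages
  have smooth_avg : ∀ (h : Fin n → E → ℝ),
      (∀ i u v, |h i u - h i v - ⟪gradient (h i) v, u - v⟫| ≤ β / 2 * ‖u - v‖ ^ 2) →
      ∀ u v, |(1/(n:ℝ)) * ∑ i, h i u - (1/(n:ℝ)) * ∑ i, h i v -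
          ⟪(1/(n:ℝ)) • ∑ i, gradient (h i) v, u - v⟫| ≤ β / 2 * ‖u - v‖ ^ 2 := by
    intro h hs u v
    have e1 : ⟪(1/(n:ℝ)) • ∑ i, gradient (h i) v, u - v⟫
        = (1/(n:ℝ)) * ∑ i, ⟪gradient (h i) v, u - v⟫ := by
      rw [real_inner_smul_left, sum_inner]
    have e2 : (1/(n:ℝ)) * ∑ i, h i u - (1/(n:ℝ)) * ∑ i, h i v -
        ⟪(1/(n:ℝ)) • ∑ i, gradient (h i) v, u - v⟫
        = (1/(n:ℝ)) * ∑ i, (h i u - h i v - ⟪gradient (h i) v, u - v⟫) := by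
      rw [e1, Finset.sum_sub_distrib, Finset.sum_sub_distrib]; ring
    rw [e2, abs_mul, abs_of_nonneg hninv]
    have e3 : |∑ i, (h i u - h i v - ⟪gradient (h i) v, u - v⟫)|
        ≤ (n:ℝ) * (β / 2 * ‖u - v‖ ^ 2) := by
      refine le_trans (Finset.abs_sum_le_sum_abs _ _) ?_
      calc ∑ i, |h i u - h i v - ⟪gradient (h i) v, u - v⟫|
          ≤ ∑ _i : Fin n, (β / 2 * ‖u - v‖ ^ 2) :=
            Finset.sum_le_sum (fun i _ => hs i u v)
        _ = (n:ℝ) * (β / 2 * ‖u - v‖ ^ 2) := by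
            rw [Finset.sum_const, Finset.card_univ, Fintype.card_fin, nsmul_eq_mul]
    calc (1/(n:ℝ)) * |∑ i, (h i u - h i v - ⟪gradient (h i) v, u - v⟫)|
        ≤ (1/(n:ℝ)) * ((n:ℝ) * (β / 2 * ‖u - v‖ ^ 2)) :=
          mul_le_mul_of_nonneg_left e3 hninv
      _ = β / 2 * ‖u - v‖ ^ 2 := by field_simp
  have hFs := smooth_avg f hsmooth
  have hFs' := smooth_avg f' hsmooth'
  -- tangent inequality for averages
  have tangent_avg : ∀ (h : Fin n → E → ℝ),
      (∀ i, ConvexOn ℝ Set.univ (h i)) →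
      (∀ i u v, |h i u - h i v - ⟪gradient (h i) v, u - v⟫| ≤ β / 2 * ‖u - v‖ ^ 2) →
      ∀ u v, ⟪(1/(n:ℝ)) • ∑ i, gradient (h i) u, v - u⟫ ≤
        (1/(n:ℝ)) * ∑ i, h i v - (1/(n:ℝ)) * ∑ i, h i u := by
    intro h hcv hs u v
    have e1 : ⟪(1/(n:ℝ)) • ∑ i, gradient (h i) u, v - u⟫
        = (1/(n:ℝ)) * ∑ i, ⟪gradient (h i) u, v - u⟫ := by
      rw [real_inner_smul_left, sum_inner]
    rw [e1, ← mul_sub, ← Finset.sum_sub_distrib]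
    refine mul_le_mul_of_nonneg_left (Finset.sum_le_sum fun i _ => ?_) hninv
    exact aux_tangent hβ.le (hcv i) (hs i) u v
  have hFt := tangent_avg f hconv hsmooth
  have hFt' := tangent_avg f' hconv' hsmooth'
  have hgF : ∀ x, gradient (fun w => (1/(n:ℝ)) * ∑ i, f i w) x = G x :=
    aux_gradient_eq hβ.le hFs
  have hgF' : ∀ x, gradient (fun w => (1/(n:ℝ)) * ∑ i, f' i w) x = G' x :=
    aux_gradient_eq hβ.le hFs'
  have hco : ∀ u v, (1/β) * ‖G u - G v‖^2 ≤ ⟪G u - G v, u - v⟫ :=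
    aux_coco hβ hFs hFt
  have hco' : ∀ u v, (1/β) * ‖G' u - G' v‖^2 ≤ ⟪G' u - G' v, u - v⟫ :=
    aux_coco hβ hFs' hFt'
  -- bound on the difference of the two average gradients
  have hGdiff : ∀ x, ‖G x - G' x‖ ≤ 2 * L / n := by
    intro x
    set ilast : Fin n := ⟨n - 1, Nat.sub_lt hn one_pos⟩ with hilast
    have e1 : G x - G' x = (1/(n:ℝ)) • ∑ i, (gradient (f i) x - gradient (f' i) x) := by
      rw [hG, hG', ← smul_sub, ← Finset.sum_sub_distrib]
    have e2 : ∑ i, (gradient (f i) x - gradient (f' i) x)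
        = gradient (f ilast) x - gradient (f' ilast) x := by
      refine Finset.sum_eq_single_of_mem ilast (Finset.mem_univ _) fun i _ hi => ?_
      rw [hneigh i (fun hv => hi (Fin.ext hv)), sub_self]
    rw [e1, e2, norm_smul, Real.norm_eq_abs, abs_of_nonneg hninv]
    have h3 : ‖gradient (f ilast) x - gradient (f' ilast) x‖ ≤ L + L := by
      refine le_trans (norm_sub_le _ _) (add_le_add ?_ ?_)
      · exact aux_grad_norm_le hβ.le hL (hsmooth ilast) (hlip ilast) x
      · exact aux_grad_norm_le hβ.le hL (hsmooth' ilast) (hlip' ilast) x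
    calc (1/(n:ℝ)) * ‖gradient (f ilast) x - gradient (f' ilast) x‖
        ≤ (1/(n:ℝ)) * (L + L) := mul_le_mul_of_nonneg_left h3 hninv
      _ = 2 * L / n := by ring
  -- the induction
  induction T with
  | zero => rw [hw0, sub_self, norm_zero]; simp
  | succ t ih =>
    rw [hw t, hw' t, hgF, hgF']
    have hsplit : (w t - η • G (w t)) - (w' t - η • G' (w' t))
        = ((w t - η • G (w t)) - (w' t - η • G (w' t))) - η • (G (w' t) - G' (w' t)) := by
      rw [smul_sub]; abel
    rw [hsplit]
    calc ‖((w t - η • G (w t)) - (w' t - η • G (w' t))) - η • (G (w' t) - G' (w' t))‖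
        ≤ ‖(w t - η • G (w t)) - (w' t - η • G (w' t))‖ + ‖η • (G (w' t) - G' (w' t))‖ :=
          norm_sub_le _ _
      _ ≤ ‖w t - w' t‖ + η * (2 * L / n) := by
          refine add_le_add (aux_nonexp hβ hη hηβ hco _ _) ?_
          rw [norm_smul, Real.norm_eq_abs, abs_of_pos hη]
          exact mul_le_mul_of_nonneg_left (hGdiff (w' t)) hη.le
      _ ≤ t * (2 * L * η / n) + η * (2 * L / n) := add_le_add_left ih _
      _ = (t + 1 : ℕ) * (2 * L * η / n) := by push_cast; ring



lemma aux_gauss_mechanism (d : ℕ) (ε δ s2 : ℝ) (hε : 0 < ε) (hδ : 0 < δ) (hs2 : 0 < s2)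
    (μ₀ : EuclideanSpace ℝ (Fin d)) (hμ : μ₀ ≠ 0)
    (hr : 0 ≤ ε * s2 - ‖μ₀‖^2/2)
    (htail : Real.exp (-((ε * s2 - ‖μ₀‖^2/2)/‖μ₀‖)^2/(2*s2)) ≤ δ)
    (ν : Measure (EuclideanSpace ℝ (Fin d)))
    (hν : ν = (∫⁻ z : EuclideanSpace ℝ (Fin d),
        ENNReal.ofReal (Real.exp (-‖z‖ ^ 2 / (2 * s2))))⁻¹ •
      volume.withDensity (fun z => ENNReal.ofReal (Real.exp (-‖z‖ ^ 2 / (2 * s2)))))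
    (S : Set (EuclideanSpace ℝ (Fin d))) (hS : MeasurableSet S) :
    ν {z | z + μ₀ ∈ S} ≤ ENNReal.ofReal (Real.exp ε) * ν S + ENNReal.ofReal δ := by
  set g : EuclideanSpace ℝ (Fin d) → ℝ≥0∞ :=
    fun z => ENNReal.ofReal (Real.exp (-‖z‖ ^ 2 / (2 * s2))) with hg
  have hgm : Measurable g := by fun_prop
  set I : ℝ≥0∞ := ∫⁻ z, g z with hI
  set m : ℝ := ‖μ₀‖ with hm
  have hm0 : 0 < m := norm_pos_iff.mpr hμ
  obtain ⟨r, hrdef⟩ : ∃ r : ℝ, r = ε * s2 - m^2/2 := ⟨_, rfl⟩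
  rw [← hrdef] at hr htail
  -- the measure of a measurable set
  have hν_apply : ∀ (S' : Set (EuclideanSpace ℝ (Fin d))), MeasurableSet S' →
      ν S' = I⁻¹ * ∫⁻ z, S'.indicator g z := by
    intro S' hS'
    rw [hν, Measure.smul_apply, withDensity_apply _ hS', smul_eq_mul,
      ← lintegral_indicator hS' g]
  have hS₁ : MeasurableSet {z : EuclideanSpace ℝ (Fin d) | z + μ₀ ∈ S} :=
    hS.preimage (measurable_id.add_const μ₀)
  -- bad set
  set Ebad : Set (EuclideanSpace ℝ (Fin d)) := {z | ε * s2 + m^2/2 < ⟪z, μ₀⟫} with hEbad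
  -- first translation
  have step1 : (∫⁻ z, ({z : EuclideanSpace ℝ (Fin d) | z + μ₀ ∈ S}).indicator g z)
      = ∫⁻ z, S.indicator (fun _ => (1:ℝ≥0∞)) z * g (z - μ₀) := by
    have := lintegral_add_right_eq_self (μ := (volume : Measure (EuclideanSpace ℝ (Fin d))))
      (fun z => S.indicator (fun _ => (1:ℝ≥0∞)) z * g (z - μ₀)) μ₀
    rw [← this]
    congr 1
    funext z
    rw [add_sub_cancel_right]
    by_cases hz : z + μ₀ ∈ S
    · rw [Set.indicator_of_mem (show z ∈ {z | z + μ₀ ∈ S} from hz),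
        Set.indicator_of_mem hz, one_mul]
    · rw [Set.indicator_of_notMem (show z ∉ {z | z + μ₀ ∈ S} from hz),
        Set.indicator_of_notMem hz, zero_mul]
  -- pointwise split
  have step2 : ∀ z, S.indicator (fun _ => (1:ℝ≥0∞)) z * g (z - μ₀)
      ≤ ENNReal.ofReal (Real.exp ε) * S.indicator g z
        + Ebad.indicator (fun z => g (z - μ₀)) z := by
    intro z
    by_cases hzS : z ∈ S
    · by_cases hzE : z ∈ Ebad
      · rw [Set.indicator_of_mem hzS, one_mul, Set.indicator_of_mem hzE]
        exact le_add_self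
      · rw [Set.indicator_of_mem hzS, one_mul, Set.indicator_of_mem hzS,
          Set.indicator_of_notMem hzE, add_zero]
        have hzE' : ⟪z, μ₀⟫ ≤ ε * s2 + m^2/2 := not_lt.mp hzE
        rw [hg]
        simp only
        rw [← ENNReal.ofReal_mul (exp_nonneg ε), ← Real.exp_add]
        refine ENNReal.ofReal_le_ofReal (Real.exp_le_exp.mpr ?_)
        have hnorm : ‖z - μ₀‖^2 = ‖z‖^2 - 2 * ⟪z, μ₀⟫ + m^2 := norm_sub_sq_real z μ₀
        have h2s2 : (0:ℝ) < 2 * s2 := by linarith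
        have key : ‖z‖^2 - ‖z - μ₀‖^2 ≤ ε * (2*s2) := by rw [hnorm]; nlinarith
        have h2 : (‖z‖^2 - ‖z - μ₀‖^2)/(2*s2) ≤ ε := by
          rw [div_le_iff₀ h2s2]; nlinarith
        rw [sub_div] at h2
        rw [neg_div, neg_div]
        linarith
    · rw [Set.indicator_of_notMem hzS, zero_mul]
      exact zero_le
  -- shift vector for the tail bound
  set a : EuclideanSpace ℝ (Fin d) := (r/m^2) • μ₀ with ha
  have hm2 : (m:ℝ) ≠ 0 := ne_of_gt hm0
  have hinner_a : ⟪a, μ₀⟫ = r := by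
    rw [ha, real_inner_smul_left, real_inner_self_eq_norm_sq, ← hm]
    field_simp
  set Tbad : Set (EuclideanSpace ℝ (Fin d)) := {z | r < ⟪z, μ₀⟫} with hTbad
  set K : ℝ≥0∞ := ENNReal.ofReal (Real.exp (-(r/m)^2/(2*s2))) with hK
  have step3 : (∫⁻ z, Ebad.indicator (fun z => g (z - μ₀)) z)
      = ∫⁻ z, Tbad.indicator (fun _ => (1:ℝ≥0∞)) z * g z := by
    have h1 := lintegral_add_right_eq_self (μ := (volume : Measure (EuclideanSpace ℝ (Fin d))))
      (fun z => Ebad.indicator (fun _ => (1:ℝ≥0∞)) (z + μ₀) * g z) (-μ₀)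
    have e1 : (∫⁻ z, Ebad.indicator (fun z => g (z - μ₀)) z)
        = ∫⁻ z, (fun z => Ebad.indicator (fun _ => (1:ℝ≥0∞)) (z + μ₀) * g z) (z + -μ₀) := by
      congr 1
      funext z
      simp only [neg_add_cancel_right]
      simp only [← sub_eq_add_neg]
      by_cases hz : z ∈ Ebad
      · rw [Set.indicator_of_mem hz, Set.indicator_of_mem hz, one_mul]
      · rw [Set.indicator_of_notMem hz, Set.indicator_of_notMem hz, zero_mul]
    rw [e1, h1]
    congr 1
    funext z
    have hiff : z + μ₀ ∈ Ebad ↔ z ∈ Tbad := by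
      simp only [hEbad, hTbad, Set.mem_setOf_eq, inner_add_left,
        real_inner_self_eq_norm_sq, ← hm]
      constructor <;> intro h <;> nlinarith
    simp only [Set.indicator_apply, hiff]
  have step4 : (∫⁻ z, Tbad.indicator (fun _ => (1:ℝ≥0∞)) z * g z) ≤ K * I := by
    have h1 := lintegral_add_right_eq_self (μ := (volume : Measure (EuclideanSpace ℝ (Fin d))))
      (fun z => Tbad.indicator (fun _ => (1:ℝ≥0∞)) z * g z) a
    rw [← h1]
    have hpt : ∀ z, Tbad.indicator (fun _ => (1:ℝ≥0∞)) (z + a) * g (z + a) ≤ K * g z := by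
      intro z
      by_cases hz : z + a ∈ Tbad
      · rw [Set.indicator_of_mem hz, one_mul]
        have hz' : 0 < ⟪z, μ₀⟫ := by
          have : r < ⟪z, μ₀⟫ + r := by
            have := hz
            rw [hTbad, Set.mem_setOf_eq, inner_add_left, hinner_a] at this
            exact this
          linarith
        have hinner_za : 0 ≤ ⟪z, a⟫ := by
          rw [ha, real_inner_smul_right]
          have : (0:ℝ) ≤ r/m^2 := div_nonneg hr (by positivity)
          positivity
        have hnorm_a : ‖a‖^2 = (r/m)^2 := by
          rw [ha, norm_smul, Real.norm_eq_abs,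
            abs_of_nonneg (div_nonneg hr (by positivity)), mul_pow, ← hm]
          field_simp
        have hnorm : ‖z + a‖^2 = ‖z‖^2 + 2*⟪z, a⟫ + ‖a‖^2 := norm_add_sq_real z a
        rw [hK, hg]
        simp only
        rw [← ENNReal.ofReal_mul (exp_nonneg _), ← Real.exp_add]
        refine ENNReal.ofReal_le_ofReal (Real.exp_le_exp.mpr ?_)
        have h2s2 : (0:ℝ) < 2 * s2 := by linarith
        rw [neg_div, neg_div, neg_div, ← neg_add, neg_le_neg_iff, ← add_div]
        rw [div_le_div_iff₀ h2s2 h2s2]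
        nlinarith [hnorm, hinner_za, hnorm_a]
      · rw [Set.indicator_of_notMem hz, zero_mul]
        exact zero_le
    calc (∫⁻ z, Tbad.indicator (fun _ => (1:ℝ≥0∞)) (z + a) * g (z + a))
        ≤ ∫⁻ z, K * g z := lintegral_mono hpt
      _ = K * I := lintegral_const_mul' _ _ ENNReal.ofReal_ne_top
  have hIinv : I⁻¹ * I ≤ 1 := by
    rcases eq_or_ne I 0 with h | h
    · rw [h]; simp
    rcases eq_or_ne I ⊤ with h' | h'
    · rw [h']; simp
    · rw [ENNReal.inv_mul_cancel h h']
  have hKδ : K ≤ ENNReal.ofReal δ := by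
    rw [hK]
    exact ENNReal.ofReal_le_ofReal htail
  calc ν {z | z + μ₀ ∈ S}
      = I⁻¹ * ∫⁻ z, ({z : EuclideanSpace ℝ (Fin d) | z + μ₀ ∈ S}).indicator g z :=
        hν_apply _ hS₁
    _ = I⁻¹ * ∫⁻ z, S.indicator (fun _ => (1:ℝ≥0∞)) z * g (z - μ₀) := by rw [step1]
    _ ≤ I⁻¹ * ∫⁻ z, (ENNReal.ofReal (Real.exp ε) * S.indicator g z
          + Ebad.indicator (fun z => g (z - μ₀)) z) :=
        mul_le_mul_right (lintegral_mono step2) _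
    _ = I⁻¹ * (ENNReal.ofReal (Real.exp ε) * (∫⁻ z, S.indicator g z)
          + ∫⁻ z, Ebad.indicator (fun z => g (z - μ₀)) z) := by
        rw [lintegral_add_left ((hgm.indicator hS).const_mul _),
          lintegral_const_mul' _ _ ENNReal.ofReal_ne_top]
    _ = ENNReal.ofReal (Real.exp ε) * (I⁻¹ * ∫⁻ z, S.indicator g z)
          + I⁻¹ * ∫⁻ z, Ebad.indicator (fun z => g (z - μ₀)) z := by ring
    _ ≤ ENNReal.ofReal (Real.exp ε) * ν S + ENNReal.ofReal δ := by
        rw [← hν_apply S hS]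
        refine add_le_add_right ?_ _
        calc I⁻¹ * ∫⁻ z, Ebad.indicator (fun z => g (z - μ₀)) z
            = I⁻¹ * ∫⁻ z, Tbad.indicator (fun _ => (1:ℝ≥0∞)) z * g z := by rw [step3]
          _ ≤ I⁻¹ * (K * I) := mul_le_mul_right step4 _
          _ = K * (I⁻¹ * I) := by ring
          _ ≤ K * 1 := mul_le_mul_right hIinv _
          _ = K := mul_one K
          _ ≤ ENNReal.ofReal δ := hKδ


set_option maxHeartbeats 2000000 in
lemma aux_numeric (ε δ Δ m s2 l : ℝ) (hε : 0 < ε) (hε1 : ε ≤ 1)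
    (hδ0 : 0 < δ) (hδ1 : δ < 1) (hm0 : 0 < m) (hmΔ : m ≤ Δ) (hΔpos : 0 < Δ)
    (hldef : l = Real.log (2/δ)) (hs2 : s2 = 2 * l * Δ^2 / ε^2) :
    0 < s2 ∧ 0 ≤ ε * s2 - m^2/2 ∧ Real.exp (-((ε * s2 - m^2/2)/m)^2/(2*s2)) ≤ δ := by
  have hℓpos : 0 < l := by
    rw [hldef]; exact Real.log_pos (by rw [lt_div_iff₀ hδ0]; linarith)
  have hℓ2 : Real.log 2 ≤ l := by
    rw [hldef]
    exact Real.log_le_log (by norm_num) (by rw [le_div_iff₀ hδ0]; nlinarith)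
  have hlog2 : (0.6931471803:ℝ) < Real.log 2 := Real.log_two_gt_d9
  have hΔ2pos : (0:ℝ) < Δ^2 := by positivity
  have hs2pos : 0 < s2 := by
    rw [hs2]
    apply div_pos (by nlinarith) (by positivity)
  have hεs2 : ε * s2 = 2 * l * Δ^2 / ε := by
    rw [hs2]; field_simp
  have hεs2' : ε * s2 / Δ = 2 * l * Δ / ε := by
    rw [hεs2]; field_simp
  have hεs2big : 2 * l * Δ^2 ≤ ε * s2 := by
    rw [hεs2, le_div_iff₀ hε]
    nlinarith [mul_pos hℓpos hΔ2pos]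
  have hm2Δ2 : m^2 ≤ Δ^2 := by nlinarith
  have hr : 0 ≤ ε * s2 - m^2/2 := by nlinarith
  refine ⟨hs2pos, hr, ?_⟩
  rw [← Real.exp_log hδ0]
  apply Real.exp_le_exp.mpr
  have hlogδ : Real.log δ = Real.log 2 - l := by
    rw [hldef, Real.log_div two_ne_zero (ne_of_gt hδ0)]; ring
  rw [hlogδ]
  have hrm0 : 0 ≤ (ε * s2 - m^2/2)/m := div_nonneg hr hm0.le
  have ht0 : 2 * l * Δ / ε - Δ/2 ≤ (ε * s2 - m^2/2)/m := by
    have e1 : (ε * s2 - m^2/2)/m = ε * s2/m - m/2 := by field_simp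
    have e2 : ε * s2 / Δ ≤ ε * s2 / m :=
      div_le_div_of_nonneg_left (by nlinarith) hm0 hmΔ
    rw [e1, ← hεs2']
    linarith
  have ht0pos : 0 ≤ 2 * l * Δ / ε - Δ/2 := by
    rw [div_sub' (ne_of_gt hε), le_div_iff₀ hε]
    nlinarith
  have hsq : (2 * l * Δ / ε - Δ/2)^2 ≤ ((ε * s2 - m^2/2)/m)^2 :=
    pow_le_pow_left₀ ht0pos ht0 2
  have hkey : (l - Real.log 2) * (2*s2) ≤ (2 * l * Δ / ε - Δ/2)^2 := by
    have e3 : (2 * l * Δ / ε - Δ/2)^2 * ε^2 = Δ^2 * (2*l - ε/2)^2 := by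
      field_simp
    have e4 : (2*s2) * ε^2 = 4 * l * Δ^2 := by
      rw [hs2]; field_simp; ring
    have hε2 : (0:ℝ) < ε^2 := by positivity
    have h2l : (0:ℝ) ≤ 2 * Real.log 2 - ε := by linarith
    have e5 : (l - Real.log 2) * ((2*s2) * ε^2) ≤ Δ^2 * (2*l - ε/2)^2 := by
      rw [e4]
      nlinarith [mul_nonneg (mul_pos hℓpos hΔ2pos).le h2l, sq_nonneg ε]
    refine le_of_mul_le_mul_right ?_ hε2
    calc (l - Real.log 2) * (2*s2) * ε^2 = (l - Real.log 2) * ((2*s2) * ε^2) := by ring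
      _ ≤ Δ^2 * (2*l - ε/2)^2 := e5
      _ = (2 * l * Δ / ε - Δ/2)^2 * ε^2 := e3.symm
  have hfin : l - Real.log 2 ≤ ((ε * s2 - m^2/2)/m)^2/(2*s2) := by
    rw [le_div_iff₀ (by positivity)]
    calc (l - Real.log 2) * (2*s2) ≤ (2 * l * Δ / ε - Δ/2)^2 := hkey
      _ ≤ ((ε * s2 - m^2/2)/m)^2 := hsq
  rw [neg_div]
  linarith

set_option maxHeartbeats 2000000 in
/-- Privacy of output-perturbed gradient descent
(Theorem 1, (ε,δ)-DP, convex case).  The spherical Gaussian with coordinate variance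
`s2 = 2 log(2/δ) Δ²/ε²` is formalized via its density proportional to
`exp (-‖z‖²/(2 s2))`. -/
theorem privacy_output_perturbed_gd_convex
    (d n T : ℕ) (hn : 0 < n) (β L η ε δ : ℝ)
    (hε : 0 < ε) (hε1 : ε ≤ 1) (hδ : δ ∈ Set.Ioo (0 : ℝ) 1)
    (f f' : Fin n → EuclideanSpace ℝ (Fin d) → ℝ)
    (hdiff : ∀ i, Differentiable ℝ (f i)) (hdiff' : ∀ i, Differentiable ℝ (f' i))
    (hneigh : ∀ i : Fin n, (i : ℕ) ≠ n - 1 → f i = f' i)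
    (hconv : ∀ i, ConvexOn ℝ Set.univ (f i)) (hconv' : ∀ i, ConvexOn ℝ Set.univ (f' i))
    (hsmooth : ∀ i u v, |f i u - f i v - ⟪gradient (f i) v, u - v⟫| ≤ β / 2 * ‖u - v‖ ^ 2)
    (hsmooth' : ∀ i u v, |f' i u - f' i v - ⟪gradient (f' i) v, u - v⟫| ≤ β / 2 * ‖u - v‖ ^ 2)
    (hlip : ∀ i u v, |f i u - f i v| ≤ L * ‖u - v‖)
    (hlip' : ∀ i u v, |f' i u - f' i v| ≤ L * ‖u - v‖)
    (hη : 0 < η) (hηβ : η ≤ 1 / β)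
    (F F' : EuclideanSpace ℝ (Fin d) → ℝ)
    (hF : F = fun w => (1 / (n : ℝ)) * ∑ i, f i w)
    (hF' : F' = fun w => (1 / (n : ℝ)) * ∑ i, f' i w)
    (w w' : ℕ → EuclideanSpace ℝ (Fin d))
    (hw0 : w' 0 = w 0)
    (hw : ∀ t, w (t + 1) = w t - η • gradient F (w t))
    (hw' : ∀ t, w' (t + 1) = w' t - η • gradient F' (w' t))
    (Δ s2 : ℝ) (hΔ : Δ = 3 * L * T * η / n)
    (hs2 : s2 = 2 * Real.log (2 / δ) * Δ ^ 2 / ε ^ 2)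
    (ν : Measure (EuclideanSpace ℝ (Fin d)))
    (hν : ν = (∫⁻ z : EuclideanSpace ℝ (Fin d),
        ENNReal.ofReal (Real.exp (-‖z‖ ^ 2 / (2 * s2))))⁻¹ •
      volume.withDensity (fun z => ENNReal.ofReal (Real.exp (-‖z‖ ^ 2 / (2 * s2))))) :
    ∀ A : Set (EuclideanSpace ℝ (Fin d)), MeasurableSet A →
      ν {z | w T + z ∈ A} ≤ ENNReal.ofReal (Real.exp ε) * ν {z | w' T + z ∈ A}
        + ENNReal.ofReal δ := by
  intro A hA
  obtain ⟨μ₀, hμ₀⟩ : ∃ μ₀, μ₀ = w T - w' T := ⟨_, rfl⟩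
  have hexp1 : (1:ℝ≥0∞) ≤ ENNReal.ofReal (Real.exp ε) := by
    rw [← ENNReal.ofReal_one]
    exact ENNReal.ofReal_le_ofReal (Real.one_le_exp hε.le)
  by_cases hμ : μ₀ = 0
  · have heq : w T = w' T := by rw [hμ₀] at hμ; rwa [sub_eq_zero] at hμ
    rw [heq]
    calc ν {z | w' T + z ∈ A} = 1 * ν {z | w' T + z ∈ A} := (one_mul _).symm
      _ ≤ ENNReal.ofReal (Real.exp ε) * ν {z | w' T + z ∈ A} := mul_le_mul_left hexp1 _
      _ ≤ _ + ENNReal.ofReal δ := le_self_add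
  · -- non-degenerate case
    have hδ0 : (0:ℝ) < δ := hδ.1
    have hδ1 : δ < 1 := hδ.2
    have hβpos : 0 < β := by
      by_contra hb
      push_neg at hb
      have h1 : 1/β ≤ 0 := by
        rcases lt_or_eq_of_le hb with h | h
        · exact le_of_lt (one_div_neg.mpr h)
        · rw [h]; simp
      linarith
    have hm0 : 0 < ‖μ₀‖ := norm_pos_iff.mpr hμ
    have hL0 : 0 ≤ L := by
      have h := hlip ⟨0, hn⟩ μ₀ 0
      rw [sub_zero] at h
      nlinarith [abs_nonneg (f ⟨0, hn⟩ μ₀ - f ⟨0, hn⟩ 0)]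
    have hsens : ‖μ₀‖ ≤ T * (2 * L * η / n) := by
      rw [hμ₀]
      exact aux_sensitivity n T hn β L η hβpos hL0 f f' hneigh hconv hconv'
        hsmooth hsmooth' hlip hlip' hη hηβ F F' hF hF' w w' hw0 hw hw'
    have hnR : (0:ℝ) < n := by exact_mod_cast hn
    have hTR : (0:ℝ) ≤ T := Nat.cast_nonneg T
    have hprod : 0 < L * T * η / n := by
      by_contra hp
      push_neg at hp
      have h1 : (T:ℝ) * (2 * L * η / n) ≤ 0 := by
        have e : (T:ℝ) * (2 * L * η / n) = 2 * (L * T * η / n) := by ring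
        rw [e]; linarith
      linarith
    have hΔpos : 0 < Δ := by
      rw [hΔ]
      have e : 3 * L * (T:ℝ) * η / n = 3 * (L * T * η / n) := by ring
      rw [e]; linarith
    have hmΔ : ‖μ₀‖ ≤ Δ := by
      rw [hΔ]
      calc ‖μ₀‖ ≤ (T:ℝ) * (2 * L * η / n) := hsens
        _ = 2 * (L * T * η / n) := by ring
        _ ≤ 3 * (L * T * η / n) := by linarith
        _ = 3 * L * (T:ℝ) * η / n := by ring
    obtain ⟨m, hmdef⟩ : ∃ m : ℝ, m = ‖μ₀‖ := ⟨_, rfl⟩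
    have hm0' : 0 < m := hmdef ▸ hm0
    have hmΔ' : m ≤ Δ := hmdef ▸ hmΔ
    obtain ⟨hs2pos, hr, htail⟩ :=
      aux_numeric ε δ Δ m s2 (Real.log (2/δ)) hε hε1 hδ0 hδ1 hm0' hmΔ' hΔpos rfl hs2
    rw [hmdef] at hr htail
    have hsetS : MeasurableSet {z : EuclideanSpace ℝ (Fin d) | w' T + z ∈ A} :=
      hA.preimage (measurable_id.const_add (w' T))
    have hsetexq : {z : EuclideanSpace ℝ (Fin d) | w T + z ∈ A}
        = {z | z + μ₀ ∈ {z : EuclideanSpace ℝ (Fin d) | w' T + z ∈ A}} := by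
      ext z
      have e : w' T + (z + μ₀) = w T + z := by rw [hμ₀]; abel
      simp only [Set.mem_setOf_eq, e]
    rw [hsetexq]
    exact aux_gauss_mechanism d ε δ s2 hε hδ0 hs2pos μ₀ hμ hr htail ν hν _ hsetS
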